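/- arXiv:0707.2557 — 3 statements merged into one kernel-verified Lean document; each statement's English description precedes it below -/
import Mathlib

section
/- Let H_x and H_y be symmetric n×n real matrices with ‖H_x − H_y‖ ≤ K|x−y| (operator norm), and let E^{μ₁}_x, E^{μ₂}_y denote the orthogonal spectral projections of H_x and H_y onto the eigenspaces with eigenvalues μ₁ and μ₂ respectively. Then ‖E^{μ₁}_x E^{μ₂}_y‖ ≤ (min{|μ₁|,|μ₂|} + K|x−y|)/max{|μ₁|,|μ₂|}, provided max{|μ₁|,|μ₂|} > 0. -/
noncomputable def Eproj {n : ℕ} (H : Matrix (Fin n) (Fin n) ℝ) (μ : ℝ) :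
    EuclideanSpace ℝ (Fin n) →L[ℝ] EuclideanSpace ℝ (Fin n) :=
  (Module.End.eigenspace (Matrix.toEuclideanLin H) μ).subtypeL.comp
    (Submodule.orthogonalProjectionOnto (Module.End.eigenspace (Matrix.toEuclideanLin H) μ))

/-- Operator norm of a matrix acting on Euclidean space. -/
noncomputable def opNorm {n : ℕ} (M : Matrix (Fin n) (Fin n) ℝ) : ℝ :=
  ‖LinearMap.toContinuousLinearMap (Matrix.toEuclideanLin M)‖

section aux

variable {n : ℕ}

/-- Eproj has norm at most 1. -/
lemma Eproj_norm_le (H : Matrix (Fin n) (Fin n) ℝ) (μ : ℝ) : ‖Eproj H μ‖ ≤ 1 := by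
  refine ContinuousLinearMap.opNorm_le_bound _ zero_le_one (fun v => ?_)
  have : ‖Eproj H μ v‖ = ‖Submodule.orthogonalProjectionOnto (Module.End.eigenspace (Matrix.toEuclideanLin H) μ) v‖ := rfl
  rw [this, one_mul]
  calc ‖Submodule.orthogonalProjectionOnto (Module.End.eigenspace (Matrix.toEuclideanLin H) μ) v‖
      ≤ ‖Submodule.orthogonalProjectionOnto (Module.End.eigenspace (Matrix.toEuclideanLin H) μ)‖ * ‖v‖ :=
        ContinuousLinearMap.le_opNorm _ _
    _ ≤ 1 * ‖v‖ := by
        gcongr; exact Submodule.orthogonalProjectionOnto_norm_le _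
    _ = ‖v‖ := one_mul _

lemma Eproj_isSelfAdjoint (H : Matrix (Fin n) (Fin n) ℝ) (μ : ℝ) :
    IsSelfAdjoint (Eproj H μ) := isSelfAdjoint_starProjection _

lemma comp_Eproj (H : Matrix (Fin n) (Fin n) ℝ) (μ : ℝ) :
    (LinearMap.toContinuousLinearMap (Matrix.toEuclideanLin H)).comp (Eproj H μ)
      = μ • Eproj H μ := by
  refine ContinuousLinearMap.ext fun v => ?_
  have hmem : Eproj H μ v ∈ Module.End.eigenspace (Matrix.toEuclideanLin H) μ :=
    (Submodule.orthogonalProjectionOnto (Module.End.eigenspace (Matrix.toEuclideanLin H) μ) v).2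
  have := Module.End.mem_eigenspace_iff.mp hmem
  simpa using this

lemma Eproj_comp (H : Matrix (Fin n) (Fin n) ℝ) (hH : H.IsHermitian) (μ : ℝ) :
    (Eproj H μ).comp (LinearMap.toContinuousLinearMap (Matrix.toEuclideanLin H))
      = μ • Eproj H μ := by
  set T := LinearMap.toContinuousLinearMap (Matrix.toEuclideanLin H)
  have hTsa : IsSelfAdjoint T := by
    rw [ContinuousLinearMap.isSelfAdjoint_iff_isSymmetric]
    exact Matrix.isHermitian_iff_isSymmetric.mp hH
  have hPsa := Eproj_isSelfAdjoint H μ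
  apply (ContinuousLinearMap.adjoint : _ ≃ₗᵢ⋆[ℝ] _).injective
  rw [ContinuousLinearMap.adjoint_comp, hTsa.adjoint_eq, hPsa.adjoint_eq, comp_Eproj,
    map_smulₛₗ, hPsa.adjoint_eq]
  simp

end aux

theorem stmt0 {n : ℕ} (K : ℝ) (hK : 0 ≤ K) (x y : EuclideanSpace ℝ (Fin n))
    (Hx Hy : Matrix (Fin n) (Fin n) ℝ) (hHx : Hx.IsHermitian) (hHy : Hy.IsHermitian)
    (hLip : opNorm (Hx - Hy) ≤ K * ‖x - y‖)
    (μ₁ μ₂ : ℝ) (hmax : 0 < max (abs μ₁) (abs μ₂)) :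
    ‖(Eproj Hx μ₁).comp (Eproj Hy μ₂)‖ ≤
      (min (abs μ₁) (abs μ₂) + K * ‖x - y‖) / max (abs μ₁) (abs μ₂) := by
  set P := Eproj Hx μ₁ with hPdef
  set Q := Eproj Hy μ₂ with hQdef
  set T := LinearMap.toContinuousLinearMap (Matrix.toEuclideanLin Hx) with hTdef
  set S := LinearMap.toContinuousLinearMap (Matrix.toEuclideanLin Hy) with hSdef
  have hD : ‖T - S‖ ≤ K * ‖x - y‖ := by
    have : T - S = LinearMap.toContinuousLinearMap (Matrix.toEuclideanLin (Hx - Hy)) := by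
      rw [hTdef, hSdef, map_sub, map_sub]
    rw [this]
    exact hLip
  have hPQ1 : ‖P.comp Q‖ ≤ 1 := by
    calc ‖P.comp Q‖ ≤ ‖P‖ * ‖Q‖ := ContinuousLinearMap.opNorm_comp_le _ _
      _ ≤ 1 * 1 := by
          have := Eproj_norm_le Hx μ₁
          have := Eproj_norm_le Hy μ₂
          gcongr <;> first | exact ContinuousLinearMap.opNorm_nonneg _ | assumption
      _ = 1 := one_mul 1
  -- key identity: μ₁ • (P ∘ Q) = μ₂ • (P ∘ Q) + P ∘ (T - S) ∘ Q
  have hkey : μ₁ • (P.comp Q) = μ₂ • (P.comp Q) + (P.comp (T - S)).comp Q := by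
    have h1 : P.comp T = μ₁ • P := Eproj_comp Hx hHx μ₁
    have h2 : S.comp Q = μ₂ • Q := comp_Eproj Hy μ₂
    have e1 : (P.comp T).comp Q = μ₁ • (P.comp Q) := by
      rw [h1]; ext v; simp
    have e2 : (P.comp S).comp Q = μ₂ • (P.comp Q) := by
      rw [ContinuousLinearMap.comp_assoc, h2]; ext v; simp
    calc μ₁ • (P.comp Q) = (P.comp T).comp Q := e1.symm
      _ = (P.comp S).comp Q + (P.comp (T - S)).comp Q := by
          ext v; simp
      _ = μ₂ • (P.comp Q) + (P.comp (T - S)).comp Q := by rw [e2]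
  have hPDQ : ‖(P.comp (T - S)).comp Q‖ ≤ K * ‖x - y‖ := by
    calc ‖(P.comp (T - S)).comp Q‖ ≤ ‖P.comp (T - S)‖ * ‖Q‖ :=
          ContinuousLinearMap.opNorm_comp_le _ _
      _ ≤ (‖P‖ * ‖T - S‖) * ‖Q‖ := by
          gcongr; exact ContinuousLinearMap.opNorm_comp_le _ _
      _ ≤ (1 * (K * ‖x - y‖)) * 1 := by
          have hP1 := Eproj_norm_le Hx μ₁
          have hQ1 := Eproj_norm_le Hy μ₂
          have hDnn : (0:ℝ) ≤ ‖T - S‖ := norm_nonneg _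
          gcongr <;> first | exact ContinuousLinearMap.opNorm_nonneg _ | assumption
      _ = K * ‖x - y‖ := by ring
  have hKx : 0 ≤ K * ‖x - y‖ := mul_nonneg hK (norm_nonneg _)
  have hn : ∀ c : ℝ, ‖c • P.comp Q‖ = |c| * ‖P.comp Q‖ := fun c => by
    rw [show ‖c • P.comp Q‖ = ‖c‖ * ‖P.comp Q‖ from norm_smul c (P.comp Q), Real.norm_eq_abs]
  have h12 : |μ₁| * ‖P.comp Q‖ ≤ |μ₂| + K * ‖x - y‖ := by
    have : ‖μ₁ • (P.comp Q)‖ ≤ ‖μ₂ • (P.comp Q)‖ + ‖(P.comp (T - S)).comp Q‖ := by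
      rw [hkey]; exact norm_add_le _ _
    rw [hn, hn] at this
    calc |μ₁| * ‖P.comp Q‖ ≤ |μ₂| * ‖P.comp Q‖ + ‖(P.comp (T - S)).comp Q‖ := this
      _ ≤ |μ₂| * 1 + K * ‖x - y‖ := by gcongr
      _ = |μ₂| + K * ‖x - y‖ := by ring
  have hkey' : μ₂ • (P.comp Q) = μ₁ • (P.comp Q) - (P.comp (T - S)).comp Q := by
    rw [hkey]; abel
  have h21 : |μ₂| * ‖P.comp Q‖ ≤ |μ₁| + K * ‖x - y‖ := by
    have : ‖μ₂ • (P.comp Q)‖ ≤ ‖μ₁ • (P.comp Q)‖ + ‖(P.comp (T - S)).comp Q‖ := by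
      rw [hkey']; exact norm_sub_le _ _
    rw [hn, hn] at this
    calc |μ₂| * ‖P.comp Q‖ ≤ |μ₁| * ‖P.comp Q‖ + ‖(P.comp (T - S)).comp Q‖ := this
      _ ≤ |μ₁| * 1 + K * ‖x - y‖ := by gcongr
      _ = |μ₁| + K * ‖x - y‖ := by ring
  rw [le_div_iff₀ hmax]
  rcases le_total (|μ₁|) (|μ₂|) with h | h
  · rw [max_eq_right h, min_eq_left h]
    calc ‖P.comp Q‖ * |μ₂| = |μ₂| * ‖P.comp Q‖ := mul_comm _ _
      _ ≤ |μ₁| + K * ‖x - y‖ := h21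
  · rw [max_eq_left h, min_eq_right h]
    calc ‖P.comp Q‖ * |μ₁| = |μ₁| * ‖P.comp Q‖ := mul_comm _ _
      _ ≤ |μ₂| + K * ‖x - y‖ := h12
end

section
/- For a real symmetric n×n matrix H, constant K > 0 and the norm N[v,r] := r^{-1}(Σ_μ |E^μ v|²((|μ|r)^{1/2}+(Kr²)^{1/3})²)^{1/2}, define N[v] := inf{r > 0 : N[v,r] < 1}. Then for all v, w ∈ ℝⁿ: (N[v+w])^{1/3} ≤ (N[v])^{1/3} + (N[w])^{1/3}. -/
open scoped RealInnerProductSpace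

/-- The nonisotropic norm `N[v,r]`, with the sum running over the eigenvalues of `H`. -/
noncomputable def Nnorm {n : ℕ} (H : Matrix (Fin n) (Fin n) ℝ) (hH : H.IsHermitian)
    (K : ℝ) (v : EuclideanSpace ℝ (Fin n)) (r : ℝ) : ℝ :=
  r⁻¹ * Real.sqrt (∑ μ ∈ Finset.image hH.eigenvalues Finset.univ,
    ‖Eproj H μ v‖ ^ 2 * (((abs μ) * r) ^ ((1:ℝ)/2) + (K * r ^ 2) ^ ((1:ℝ)/3)) ^ 2)

/-- The dual nonisotropic norm `N*[v,r]`. -/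
noncomputable def Ndual {n : ℕ} (H : Matrix (Fin n) (Fin n) ℝ) (hH : H.IsHermitian)
    (K : ℝ) (v : EuclideanSpace ℝ (Fin n)) (r : ℝ) : ℝ :=
  Real.sqrt (∑ μ ∈ Finset.image hH.eigenvalues Finset.univ,
    ‖Eproj H μ v‖ ^ 2 / (((abs μ) * r) ^ ((1:ℝ)/2) + (K * r ^ 2) ^ ((1:ℝ)/3)) ^ 2)

/-- `N[v] = inf { r > 0 : N[v,r] < 1 }`. -/
noncomputable def NnormInf {n : ℕ} (H : Matrix (Fin n) (Fin n) ℝ) (hH : H.IsHermitian)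
    (K : ℝ) (v : EuclideanSpace ℝ (Fin n)) : ℝ :=
  sInf {r : ℝ | 0 < r ∧ Nnorm H hH K v r < 1}

lemma myF_scale {K : ℝ} (hK : 0 < K) (μ : ℝ) {s r : ℝ} (hs : 0 < s) (hsr : s ≤ r) :
    ((|μ| * r) ^ ((1:ℝ)/2) + (K * r ^ 2) ^ ((1:ℝ)/3))
      ≤ (r/s) ^ ((2:ℝ)/3) * ((|μ| * s) ^ ((1:ℝ)/2) + (K * s ^ 2) ^ ((1:ℝ)/3)) := by
  have hr : 0 < r := hs.trans_le hsr
  have hx1 : 1 ≤ r / s := (one_le_div hs).2 hsr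
  have hx0 : (0:ℝ) ≤ r / s := by positivity
  have h1 : |μ| * r = (|μ| * s) * (r/s) := by field_simp
  have h2 : K * r ^ 2 = (K * s ^ 2) * (r/s) ^ (2:ℕ) := by field_simp
  have e2 : (((r/s) ^ (2:ℕ) : ℝ)) ^ ((1:ℝ)/3) = (r/s) ^ ((2:ℝ)/3) := by
    rw [← Real.rpow_natCast (r/s) 2, ← Real.rpow_mul hx0]; norm_num
  rw [h1, h2,
    show ((|μ| * s) * (r/s)) ^ ((1:ℝ)/2) = (|μ| * s) ^ ((1:ℝ)/2) * (r/s) ^ ((1:ℝ)/2) from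
      Real.mul_rpow (by positivity) hx0,
    show ((K * s ^ 2) * (r/s) ^ (2:ℕ)) ^ ((1:ℝ)/3)
        = (K * s ^ 2) ^ ((1:ℝ)/3) * ((r/s) ^ (2:ℕ)) ^ ((1:ℝ)/3) from
      Real.mul_rpow (by positivity) (by positivity), e2]
  have e1 : (r/s) ^ ((1:ℝ)/2) ≤ (r/s) ^ ((2:ℝ)/3) :=
    Real.rpow_le_rpow_of_exponent_le hx1 (by norm_num)
  have h3 : (0:ℝ) ≤ (|μ| * s) ^ ((1:ℝ)/2) := by positivity
  nlinarith [Real.rpow_nonneg (show (0:ℝ) ≤ K * s^2 by positivity) ((1:ℝ)/3)]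

lemma coeff_id {s r : ℝ} (hs : 0 < s) (hr : 0 < r) :
    r⁻¹ * (r/s) ^ ((2:ℝ)/3) = (s/r) ^ ((1:ℝ)/3) * s⁻¹ := by
  have hx : (0:ℝ) < r/s := by positivity
  have e : (s/r) ^ ((1:ℝ)/3) = ((r/s) ^ ((1:ℝ)/3))⁻¹ := by
    rw [show s/r = (r/s)⁻¹ from (inv_div r s).symm, Real.inv_rpow hx.le]
  have e3 : (r/s) ^ ((2:ℝ)/3) * (r/s) ^ ((1:ℝ)/3) = r/s := by
    rw [← Real.rpow_add hx]; norm_num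
  rw [e]
  have hne : (r/s) ^ ((1:ℝ)/3) ≠ 0 := (Real.rpow_pos_of_pos hx _).ne'
  have hs' : s ≠ 0 := hs.ne'
  have hr' : r ≠ 0 := hr.ne'
  have e4 : (r/s) ^ ((2:ℝ)/3) * (r/s) ^ ((1:ℝ)/3) * s = r := by
    rw [e3]; field_simp
  field_simp
  linear_combination e4

lemma third_subadd {x y : ℝ} (hx : 0 ≤ x) (hy : 0 ≤ y) :
    (x + y) ^ ((1:ℝ)/3) ≤ x ^ ((1:ℝ)/3) + y ^ ((1:ℝ)/3) := by
  have h := NNReal.rpow_add_le_add_rpow x.toNNReal y.toNNReal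
    (by norm_num : (0:ℝ) ≤ 1/3) (by norm_num : (1:ℝ)/3 ≤ 1)
  rw [← Real.toNNReal_add hx hy] at h
  have h2 := NNReal.coe_le_coe.2 h
  rwa [NNReal.coe_add, NNReal.coe_rpow, NNReal.coe_rpow, NNReal.coe_rpow,
    Real.coe_toNNReal _ (by linarith), Real.coe_toNNReal _ hx, Real.coe_toNNReal _ hy] at h2

lemma Nnorm_add_le {n : ℕ} (H : Matrix (Fin n) (Fin n) ℝ) (hH : H.IsHermitian)
    {K : ℝ} (hK : 0 < K) (v w : EuclideanSpace ℝ (Fin n)) {r : ℝ} (hr : 0 < r) :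
    Nnorm H hH K (v + w) r ≤ Nnorm H hH K v r + Nnorm H hH K w r := by
  unfold Nnorm
  rw [← mul_add]
  apply mul_le_mul_of_nonneg_left _ (inv_nonneg.2 hr.le)
  set S := Finset.image hH.eigenvalues Finset.univ with hS
  set F : ℝ → ℝ := fun μ => ((|μ| * r) ^ ((1:ℝ)/2) + (K * r ^ 2) ^ ((1:ℝ)/3)) with hF
  have normgen : ∀ (g : ℝ → ℝ) (X : EuclideanSpace ℝ S),
      (∀ μ : S, X μ = g μ) → ‖X‖ = Real.sqrt (∑ μ ∈ S, (g μ) ^ 2) := by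
    intro g X hX
    refine (EuclideanSpace.norm_eq X).trans ?_
    congr 1
    rw [← Finset.sum_coe_sort S (fun μ => g μ ^ 2)]
    apply Finset.sum_congr rfl
    intro μ _
    rw [hX μ, Real.norm_eq_abs, sq_abs]
  set A : EuclideanSpace ℝ S := WithLp.toLp 2 (fun μ => ‖Eproj H (μ:ℝ) v‖ * F μ) with hA
  set B : EuclideanSpace ℝ S := WithLp.toLp 2 (fun μ => ‖Eproj H (μ:ℝ) w‖ * F μ) with hB
  have normA : ‖A‖ = Real.sqrt (∑ μ ∈ S, (‖Eproj H μ v‖ * F μ) ^ 2) :=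
    normgen (fun μ => ‖Eproj H μ v‖ * F μ) A (fun μ => rfl)
  have normB : ‖B‖ = Real.sqrt (∑ μ ∈ S, (‖Eproj H μ w‖ * F μ) ^ 2) :=
    normgen (fun μ => ‖Eproj H μ w‖ * F μ) B (fun μ => rfl)
  have normAB : ‖A + B‖
      = Real.sqrt (∑ μ ∈ S, (‖Eproj H μ v‖ * F μ + ‖Eproj H μ w‖ * F μ) ^ 2) :=
    normgen (fun μ => ‖Eproj H μ v‖ * F μ + ‖Eproj H μ w‖ * F μ) (A + B) (fun μ => rfl)
  have hsq : ∀ μ : ℝ, ∀ u, ‖Eproj H μ u‖ ^ 2 * F μ ^ 2 = (‖Eproj H μ u‖ * F μ) ^ 2 := by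
    intro μ u; ring
  have step1 : Real.sqrt (∑ μ ∈ S, ‖Eproj H μ (v + w)‖ ^ 2 * F μ ^ 2) ≤ ‖A + B‖ := by
    rw [normAB]
    apply Real.sqrt_le_sqrt
    apply Finset.sum_le_sum
    intro μ _
    rw [hsq]
    have hF0 : (0:ℝ) ≤ F μ := by
      simp only [hF]; positivity
    have h1 : ‖Eproj H μ (v + w)‖ ≤ ‖Eproj H μ v‖ + ‖Eproj H μ w‖ := by
      rw [map_add]; exact norm_add_le _ _
    have h3 : ‖Eproj H μ (v + w)‖ ^ 2 ≤ (‖Eproj H μ v‖ + ‖Eproj H μ w‖) ^ 2 :=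
      pow_le_pow_left₀ (norm_nonneg _) h1 2
    calc (‖Eproj H μ (v + w)‖ * F μ) ^ 2
        = ‖Eproj H μ (v + w)‖ ^ 2 * F μ ^ 2 := by ring
      _ ≤ (‖Eproj H μ v‖ + ‖Eproj H μ w‖) ^ 2 * F μ ^ 2 :=
          mul_le_mul_of_nonneg_right h3 (sq_nonneg _)
      _ = (‖Eproj H μ v‖ * F μ + ‖Eproj H μ w‖ * F μ) ^ 2 := by ring
  calc Real.sqrt (∑ μ ∈ S, ‖Eproj H μ (v + w)‖ ^ 2 * F μ ^ 2) ≤ ‖A + B‖ := step1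
    _ ≤ ‖A‖ + ‖B‖ := norm_add_le _ _
    _ = _ := by
        rw [normA, normB]
        congr 1 <;> · congr 1; apply Finset.sum_congr rfl; intro μ _; rw [hsq]

lemma Nnorm_scale {n : ℕ} (H : Matrix (Fin n) (Fin n) ℝ) (hH : H.IsHermitian)
    {K : ℝ} (hK : 0 < K) (u : EuclideanSpace ℝ (Fin n)) {s r : ℝ}
    (hs : 0 < s) (hsr : s ≤ r) :
    Nnorm H hH K u r ≤ (s/r) ^ ((1:ℝ)/3) * Nnorm H hH K u s := by
  have hr : 0 < r := hs.trans_le hsr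
  unfold Nnorm
  set S := Finset.image hH.eigenvalues Finset.univ with hS
  set c : ℝ := (r/s) ^ ((2:ℝ)/3) with hc
  have hc0 : 0 ≤ c := by positivity
  have hsum : (∑ μ ∈ S, ‖Eproj H μ u‖ ^ 2 * ((|μ| * r) ^ ((1:ℝ)/2) + (K * r ^ 2) ^ ((1:ℝ)/3)) ^ 2)
      ≤ c ^ 2 * ∑ μ ∈ S, ‖Eproj H μ u‖ ^ 2 * ((|μ| * s) ^ ((1:ℝ)/2) + (K * s ^ 2) ^ ((1:ℝ)/3)) ^ 2 := by
    rw [Finset.mul_sum]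
    apply Finset.sum_le_sum
    intro μ _
    have h := myF_scale hK μ hs hsr
    have h2 : ((|μ| * r) ^ ((1:ℝ)/2) + (K * r ^ 2) ^ ((1:ℝ)/3)) ^ 2
        ≤ (c * ((|μ| * s) ^ ((1:ℝ)/2) + (K * s ^ 2) ^ ((1:ℝ)/3))) ^ 2 :=
      pow_le_pow_left₀ (by positivity) h 2
    calc ‖Eproj H μ u‖ ^ 2 * ((|μ| * r) ^ ((1:ℝ)/2) + (K * r ^ 2) ^ ((1:ℝ)/3)) ^ 2
        ≤ ‖Eproj H μ u‖ ^ 2 * (c * ((|μ| * s) ^ ((1:ℝ)/2) + (K * s ^ 2) ^ ((1:ℝ)/3))) ^ 2 :=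
          mul_le_mul_of_nonneg_left h2 (by positivity)
      _ = c ^ 2 * (‖Eproj H μ u‖ ^ 2 * ((|μ| * s) ^ ((1:ℝ)/2) + (K * s ^ 2) ^ ((1:ℝ)/3)) ^ 2) := by
          ring
  calc r⁻¹ * Real.sqrt (∑ μ ∈ S, ‖Eproj H μ u‖ ^ 2 * ((|μ| * r) ^ ((1:ℝ)/2) + (K * r ^ 2) ^ ((1:ℝ)/3)) ^ 2)
      ≤ r⁻¹ * Real.sqrt (c ^ 2 * ∑ μ ∈ S, ‖Eproj H μ u‖ ^ 2 * ((|μ| * s) ^ ((1:ℝ)/2) + (K * s ^ 2) ^ ((1:ℝ)/3)) ^ 2) :=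
        mul_le_mul_of_nonneg_left (Real.sqrt_le_sqrt hsum) (inv_nonneg.2 hr.le)
    _ = r⁻¹ * (c * Real.sqrt (∑ μ ∈ S, ‖Eproj H μ u‖ ^ 2 * ((|μ| * s) ^ ((1:ℝ)/2) + (K * s ^ 2) ^ ((1:ℝ)/3)) ^ 2)) := by
        rw [Real.sqrt_mul (sq_nonneg c), Real.sqrt_sq hc0]
    _ = (s/r) ^ ((1:ℝ)/3) * (s⁻¹ * Real.sqrt (∑ μ ∈ S, ‖Eproj H μ u‖ ^ 2 * ((|μ| * s) ^ ((1:ℝ)/2) + (K * s ^ 2) ^ ((1:ℝ)/3)) ^ 2)) := by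
        rw [← mul_assoc, ← mul_assoc, coeff_id hs hr]

lemma cube_rpow_third {s : ℝ} (hs : 0 ≤ s) : (s ^ ((1:ℝ)/3)) ^ (3:ℕ) = s := by
  rw [← Real.rpow_natCast (s ^ ((1:ℝ)/3)) 3, ← Real.rpow_mul hs]
  norm_num

lemma key_mem {n : ℕ} (H : Matrix (Fin n) (Fin n) ℝ) (hH : H.IsHermitian)
    {K : ℝ} (hK : 0 < K) (v w : EuclideanSpace ℝ (Fin n)) {s t : ℝ}
    (hs : 0 < s) (hvs : Nnorm H hH K v s < 1)
    (ht : 0 < t) (hwt : Nnorm H hH K w t < 1) :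
    0 < (s ^ ((1:ℝ)/3) + t ^ ((1:ℝ)/3)) ^ (3:ℕ) ∧
      Nnorm H hH K (v + w) ((s ^ ((1:ℝ)/3) + t ^ ((1:ℝ)/3)) ^ (3:ℕ)) < 1 := by
  set a := s ^ ((1:ℝ)/3) with ha
  set b := t ^ ((1:ℝ)/3) with hb
  have ha0 : 0 < a := Real.rpow_pos_of_pos hs _
  have hb0 : 0 < b := Real.rpow_pos_of_pos ht _
  set r := (a + b) ^ (3:ℕ) with hr'
  have hr : 0 < r := by positivity
  have hsr : s ≤ r := by
    calc s = a ^ (3:ℕ) := (cube_rpow_third hs.le).symm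
      _ ≤ (a + b) ^ (3:ℕ) := pow_le_pow_left₀ ha0.le (le_add_of_nonneg_right hb0.le) 3
  have htr : t ≤ r := by
    calc t = b ^ (3:ℕ) := (cube_rpow_third ht.le).symm
      _ ≤ (a + b) ^ (3:ℕ) := pow_le_pow_left₀ hb0.le (le_add_of_nonneg_left ha0.le) 3
  have r13 : r ^ ((1:ℝ)/3) = a + b := by
    rw [hr', ← Real.rpow_natCast (a + b) 3, ← Real.rpow_mul (by positivity)]
    norm_num
  refine ⟨hr, ?_⟩
  have c1 : (0:ℝ) < (s/r) ^ ((1:ℝ)/3) := Real.rpow_pos_of_pos (by positivity) _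
  have c2 : (0:ℝ) < (t/r) ^ ((1:ℝ)/3) := Real.rpow_pos_of_pos (by positivity) _
  have hdiv : (s/r) ^ ((1:ℝ)/3) + (t/r) ^ ((1:ℝ)/3) = 1 := by
    rw [Real.div_rpow hs.le hr.le, Real.div_rpow ht.le hr.le, r13, ← ha, ← hb,
      ← add_div, div_self (by positivity)]
  calc Nnorm H hH K (v + w) r
      ≤ Nnorm H hH K v r + Nnorm H hH K w r := Nnorm_add_le H hH hK v w hr
    _ ≤ (s/r) ^ ((1:ℝ)/3) * Nnorm H hH K v s + (t/r) ^ ((1:ℝ)/3) * Nnorm H hH K w t := by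
        gcongr
        · exact Nnorm_scale H hH hK v hs hsr
        · exact Nnorm_scale H hH hK w ht htr
    _ < (s/r) ^ ((1:ℝ)/3) * 1 + (t/r) ^ ((1:ℝ)/3) * 1 := by
        gcongr
    _ = 1 := by rw [mul_one, mul_one, hdiv]


theorem stmt4 {n : ℕ} (H : Matrix (Fin n) (Fin n) ℝ) (hH : H.IsHermitian)
    (K : ℝ) (hK : 0 < K) (v w : EuclideanSpace ℝ (Fin n))
    (hv : {r : ℝ | 0 < r ∧ Nnorm H hH K v r < 1}.Nonempty)
    (hw : {r : ℝ | 0 < r ∧ Nnorm H hH K w r < 1}.Nonempty)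
    (hvw : {r : ℝ | 0 < r ∧ Nnorm H hH K (v + w) r < 1}.Nonempty)
    (hv0 : 0 < NnormInf H hH K v) (hw0 : 0 < NnormInf H hH K w) :
    (NnormInf H hH K (v + w)) ^ ((1:ℝ)/3) ≤
      (NnormInf H hH K v) ^ ((1:ℝ)/3) + (NnormInf H hH K w) ^ ((1:ℝ)/3) := by
  have hbvw : BddBelow {r : ℝ | 0 < r ∧ Nnorm H hH K (v + w) r < 1} :=
    ⟨0, fun x hx => hx.1.le⟩
  have hvwnn : 0 ≤ NnormInf H hH K (v + w) :=
    le_csInf hvw (fun b hb => hb.1.le)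
  have keybound : ∀ s ∈ {r : ℝ | 0 < r ∧ Nnorm H hH K v r < 1},
      ∀ t ∈ {r : ℝ | 0 < r ∧ Nnorm H hH K w r < 1},
      (NnormInf H hH K (v + w)) ^ ((1:ℝ)/3) ≤ s ^ ((1:ℝ)/3) + t ^ ((1:ℝ)/3) := by
    intro s hsmem t htmem
    obtain ⟨hs, hvs⟩ := hsmem
    obtain ⟨ht, hwt⟩ := htmem
    obtain ⟨hrpos, hlt⟩ := key_mem H hH hK v w hs hvs ht hwt
    have hle : NnormInf H hH K (v + w) ≤ (s ^ ((1:ℝ)/3) + t ^ ((1:ℝ)/3)) ^ (3:ℕ) :=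
      csInf_le hbvw ⟨hrpos, hlt⟩
    calc (NnormInf H hH K (v + w)) ^ ((1:ℝ)/3)
        ≤ ((s ^ ((1:ℝ)/3) + t ^ ((1:ℝ)/3)) ^ (3:ℕ)) ^ ((1:ℝ)/3) :=
          Real.rpow_le_rpow hvwnn hle (by norm_num)
      _ = s ^ ((1:ℝ)/3) + t ^ ((1:ℝ)/3) := by
          rw [← Real.rpow_natCast (s ^ ((1:ℝ)/3) + t ^ ((1:ℝ)/3)) 3,
            ← Real.rpow_mul (by positivity)]
          norm_num
  apply le_of_forall_pos_le_add
  intro ε hε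
  set δ := (ε/2) ^ (3:ℕ) with hδ
  have hδ0 : 0 < δ := by positivity
  obtain ⟨s, hsmem, hslt⟩ := exists_lt_of_csInf_lt hv
    (lt_add_of_pos_right (NnormInf H hH K v) hδ0)
  obtain ⟨t, htmem, htlt⟩ := exists_lt_of_csInf_lt hw
    (lt_add_of_pos_right (NnormInf H hH K w) hδ0)
  have hδthird : δ ^ ((1:ℝ)/3) = ε/2 := by
    rw [hδ, ← Real.rpow_natCast (ε/2) 3, ← Real.rpow_mul (by positivity)]
    norm_num
  have h1 : s ^ ((1:ℝ)/3) ≤ (NnormInf H hH K v) ^ ((1:ℝ)/3) + ε/2 := by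
    calc s ^ ((1:ℝ)/3) ≤ (NnormInf H hH K v + δ) ^ ((1:ℝ)/3) :=
          Real.rpow_le_rpow hsmem.1.le hslt.le (by norm_num)
      _ ≤ (NnormInf H hH K v) ^ ((1:ℝ)/3) + δ ^ ((1:ℝ)/3) :=
          third_subadd hv0.le hδ0.le
      _ = _ := by rw [hδthird]
  have h2 : t ^ ((1:ℝ)/3) ≤ (NnormInf H hH K w) ^ ((1:ℝ)/3) + ε/2 := by
    calc t ^ ((1:ℝ)/3) ≤ (NnormInf H hH K w + δ) ^ ((1:ℝ)/3) :=
          Real.rpow_le_rpow htmem.1.le htlt.le (by norm_num)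
      _ ≤ (NnormInf H hH K w) ^ ((1:ℝ)/3) + δ ^ ((1:ℝ)/3) :=
          third_subadd hw0.le hδ0.le
      _ = _ := by rw [hδthird]
  calc (NnormInf H hH K (v + w)) ^ ((1:ℝ)/3)
      ≤ s ^ ((1:ℝ)/3) + t ^ ((1:ℝ)/3) := keybound s hsmem t htmem
    _ ≤ ((NnormInf H hH K v) ^ ((1:ℝ)/3) + ε/2) + ((NnormInf H hH K w) ^ ((1:ℝ)/3) + ε/2) :=
        add_le_add h1 h2
    _ = (NnormInf H hH K v) ^ ((1:ℝ)/3) + (NnormInf H hH K w) ^ ((1:ℝ)/3) + ε := by ring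
end

section
/- Let T be a real n×m matrix of rank r, with P_L the orthogonal projection onto the kernel of Tᵗ and P_R the orthogonal projection onto the kernel of T. Then there exists a matrix A with P_R A = 0 and A P_L = 0 such that for any matrix S close to T, S has rank exactly r if and only if P_L S P_R − P_L S (I−P_R) A' (I−P_L) S P_R = 0, where A' is the appropriate pseudo-inverse of (I−P_L)S(I−P_R). In particular, if S = T then the left-hand side vanishes. -/
open Matrix

/-- `N` is a Moore–Penrose pseudo-inverse of `M`. -/
def IsPseudoInv {k l : ℕ} (M : Matrix (Fin k) (Fin l) ℝ) (N : Matrix (Fin l) (Fin k) ℝ) :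
    Prop :=
  M * N * M = M ∧ N * M * N = N ∧ Matrix.transpose (M * N) = M * N ∧ Matrix.transpose (N * M) = N * M

namespace Stmt18Aux


lemma eq_of_mulVec_eq {a b : ℕ} {M N : Matrix (Fin a) (Fin b) ℝ}
    (h : ∀ x, M *ᵥ x = N *ᵥ x) : M = N := by
  ext i j
  have := congrFun (h (Pi.single j 1)) i
  simpa using this

lemma mem_range_iff_fixed {a : ℕ} {P : Matrix (Fin a) (Fin a) ℝ} (hP : P * P = P)
    (v : Fin a → ℝ) : v ∈ LinearMap.range P.mulVecLin ↔ P *ᵥ v = v := by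
  constructor
  · rintro ⟨w, rfl⟩
    simp only [Matrix.mulVecLin_apply, Matrix.mulVec_mulVec, hP]
  · intro h; exact ⟨v, h⟩

lemma symm_idem_eq_of_range_eq {a : ℕ} {P Q : Matrix (Fin a) (Fin a) ℝ}
    (hPs : Pᵀ = P) (hPi : P * P = P) (hQs : Qᵀ = Q) (hQi : Q * Q = Q)
    (h : LinearMap.range P.mulVecLin = LinearMap.range Q.mulVecLin) : P = Q := by
  have hQP : Q * P = P := by
    apply eq_of_mulVec_eq; intro x
    have hx : P *ᵥ x ∈ LinearMap.range Q.mulVecLin := h ▸ ⟨x, rfl⟩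
    rw [← Matrix.mulVec_mulVec]
    exact (mem_range_iff_fixed hQi _).1 hx
  have hPQ : P * Q = Q := by
    apply eq_of_mulVec_eq; intro x
    have hx : Q *ᵥ x ∈ LinearMap.range P.mulVecLin := h ▸ ⟨x, rfl⟩
    rw [← Matrix.mulVec_mulVec]
    exact (mem_range_iff_fixed hPi _).1 hx
  calc P = Pᵀ := hPs.symm
    _ = (Q * P)ᵀ := by rw [hQP]
    _ = Pᵀ * Qᵀ := by rw [Matrix.transpose_mul]
    _ = P * Q := by rw [hPs, hQs]
    _ = Q := hPQ

lemma rank_one_sub_proj {a b : ℕ} (M : Matrix (Fin a) (Fin b) ℝ)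
    {P : Matrix (Fin b) (Fin b) ℝ} (hPi : P * P = P)
    (hker : ∀ v, P *ᵥ v = v ↔ M *ᵥ v = 0) : (1 - P).rank = M.rank := by
  have h1mPi : (1 - P) * (1 - P) = 1 - P := by
    simp only [Matrix.mul_sub, Matrix.sub_mul, Matrix.mul_one, Matrix.one_mul, hPi]
    abel
  have hrangeP : LinearMap.range P.mulVecLin = LinearMap.ker M.mulVecLin := by
    ext v
    rw [mem_range_iff_fixed hPi, LinearMap.mem_ker, Matrix.mulVecLin_apply, hker]
  have hrange1mP : LinearMap.range (1 - P).mulVecLin = LinearMap.ker P.mulVecLin := by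
    ext v
    rw [mem_range_iff_fixed h1mPi, LinearMap.mem_ker, Matrix.mulVecLin_apply,
      Matrix.sub_mulVec, Matrix.one_mulVec]
    exact sub_eq_self
  have a1 : M.rank + Module.finrank ℝ (LinearMap.ker M.mulVecLin) = b := by
    rw [Matrix.rank]
    have := LinearMap.finrank_range_add_finrank_ker M.mulVecLin
    simpa using this
  have a2 : P.rank + Module.finrank ℝ (LinearMap.ker P.mulVecLin) = b := by
    rw [Matrix.rank]
    have := LinearMap.finrank_range_add_finrank_ker P.mulVecLin
    simpa using this
  have a3 : P.rank = Module.finrank ℝ (LinearMap.ker M.mulVecLin) := by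
    rw [Matrix.rank, hrangeP]
  have a4 : (1 - P).rank = Module.finrank ℝ (LinearMap.ker P.mulVecLin) := by
    rw [Matrix.rank, hrange1mP]
  omega



lemma exists_factorization {a b r : ℕ} (M : Matrix (Fin a) (Fin b) ℝ) (h : M.rank = r) :
    ∃ (C : Matrix (Fin a) (Fin r) ℝ) (R : Matrix (Fin r) (Fin b) ℝ),
      M = C * R ∧ IsUnit (Cᵀ * C).det ∧ IsUnit (R * Rᵀ).det := by
  set V := LinearMap.range M.mulVecLin with hV
  have hfr : Module.finrank ℝ V = r := h
  let bV : Module.Basis (Fin r) ℝ V := Module.finBasisOfFinrankEq ℝ V hfr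
  have memj : ∀ j, (fun i => M i j) ∈ V := by
    intro j
    refine ⟨Pi.single j 1, ?_⟩
    simp [Matrix.mulVecLin_apply]; rfl
  let C : Matrix (Fin a) (Fin r) ℝ := Matrix.of fun i k => (bV k : Fin a → ℝ) i
  let R : Matrix (Fin r) (Fin b) ℝ := Matrix.of fun k j => bV.repr ⟨fun i => M i j, memj j⟩ k
  have hMCR : M = C * R := by
    ext i j
    have h0 := congrArg (fun v : V => (v : Fin a → ℝ) i) (bV.sum_repr ⟨fun i => M i j, memj j⟩)
    simp only [AddSubmonoidClass.coe_finset_sum, SetLike.val_smul, Finset.sum_apply,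
      Pi.smul_apply, smul_eq_mul] at h0
    rw [Matrix.mul_apply]
    rw [← h0]
    simp only [C, R, Matrix.of_apply]
    exact Finset.sum_congr rfl fun k _ => (mul_comm _ _)
  have hCvec : ∀ x : Fin r → ℝ, C *ᵥ x = 0 → x = 0 := by
    intro x hx
    have hsum : (∑ k, x k • (bV k : Fin a → ℝ)) = 0 := by
      ext i
      have := congrFun hx i
      simpa [Matrix.mulVec, dotProduct, C, mul_comm] using this
    have hsum' : (∑ k, x k • bV k) = (0 : V) := by
      apply Subtype.ext
      push_cast
      simpa using hsum
    have hli := Fintype.linearIndependent_iff.mp bV.linearIndependent x hsum'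
    funext k; exact hli k
  have hCtC : IsUnit (Cᵀ * C).det := by
    by_contra hdet
    have h0 : (Cᵀ * C).det = 0 := by
      simpa [isUnit_iff_ne_zero] using hdet
    obtain ⟨v, hv, hveq⟩ := (Matrix.exists_mulVec_eq_zero_iff).2 h0
    apply hv
    apply hCvec v
    have hdp : v ⬝ᵥ ((Cᵀ * C) *ᵥ v) = (C *ᵥ v) ⬝ᵥ (C *ᵥ v) := by
      rw [← Matrix.mulVec_mulVec, Matrix.dotProduct_mulVec, Matrix.vecMul_transpose]
    rw [hveq] at hdp
    simp only [dotProduct_zero] at hdp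
    exact (dotProduct_self_eq_zero.mp hdp.symm)
  -- rank of R
  have hrR : R.rank = r := by
    have h1 : R.rank ≤ r := R.rank_le_height
    have h2 : r ≤ R.rank := by
      calc r = M.rank := h.symm
        _ = (C * R).rank := by rw [hMCR]
        _ ≤ R.rank := Matrix.rank_mul_le_right C R
    omega
  have hRtvec : ∀ x : Fin r → ℝ, Rᵀ *ᵥ x = 0 → x = 0 := by
    have hrRt : Rᵀ.rank = r := by rw [Matrix.rank_transpose]; exact hrR
    have hker : Module.finrank ℝ (LinearMap.ker (Rᵀ).mulVecLin) = 0 := by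
      have := LinearMap.finrank_range_add_finrank_ker (Rᵀ).mulVecLin
      rw [← Matrix.rank] at this
      simp only [Module.finrank_pi, Fintype.card_fin] at this
      omega
    intro x hx
    have hxk : x ∈ LinearMap.ker (Rᵀ).mulVecLin :=
      LinearMap.mem_ker.mpr (by simp only [Matrix.mulVecLin_apply]; exact hx)
    have : LinearMap.ker (Rᵀ).mulVecLin = ⊥ := Submodule.finrank_eq_zero.mp hker
    rw [this] at hxk
    simpa using hxk
  have hRRt : IsUnit (R * Rᵀ).det := by
    by_contra hdet
    have h0 : (R * Rᵀ).det = 0 := by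
      simpa [isUnit_iff_ne_zero] using hdet
    obtain ⟨v, hv, hveq⟩ := (Matrix.exists_mulVec_eq_zero_iff).2 h0
    apply hv
    apply hRtvec v
    have hdp : v ⬝ᵥ ((R * Rᵀ) *ᵥ v) = (Rᵀ *ᵥ v) ⬝ᵥ (Rᵀ *ᵥ v) := by
      rw [← Matrix.mulVec_mulVec, Matrix.dotProduct_mulVec, Matrix.mulVec_transpose]
    rw [hveq] at hdp
    simp only [dotProduct_zero] at hdp
    exact (dotProduct_self_eq_zero.mp hdp.symm)
  exact ⟨C, R, hMCR, hCtC, hRRt⟩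



lemma exists_LR {a b r : ℕ} (M : Matrix (Fin a) (Fin b) ℝ) (h : M.rank = r) :
    ∃ (L : Matrix (Fin r) (Fin a) ℝ) (R' : Matrix (Fin b) (Fin r) ℝ),
      L * M * R' = (1 : Matrix (Fin r) (Fin r) ℝ) := by
  obtain ⟨C, R, hMCR, hC, hR⟩ := exists_factorization M h
  refine ⟨(Cᵀ * C)⁻¹ * Cᵀ, Rᵀ * (R * Rᵀ)⁻¹, ?_⟩
  have : (Cᵀ * C)⁻¹ * Cᵀ * (C * R) * (Rᵀ * (R * Rᵀ)⁻¹)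
      = ((Cᵀ * C)⁻¹ * (Cᵀ * C)) * ((R * Rᵀ) * (R * Rᵀ)⁻¹) := by
    simp only [Matrix.mul_assoc]
  rw [hMCR, this, Matrix.nonsing_inv_mul _ hC, Matrix.mul_nonsing_inv _ hR, Matrix.one_mul]

lemma exists_pinv {a b : ℕ} (M : Matrix (Fin a) (Fin b) ℝ) :
    ∃ N : Matrix (Fin b) (Fin a) ℝ, IsPseudoInv M N := by
  obtain ⟨r0, hr0⟩ : ∃ r0, M.rank = r0 := ⟨_, rfl⟩
  obtain ⟨C, R, hMCR, hC, hR⟩ := exists_factorization M hr0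
  have e1 : C * ((Cᵀ * C)⁻¹ * (Cᵀ * C)) = C := by
    rw [Matrix.nonsing_inv_mul _ hC, Matrix.mul_one]
  have e2 : (R * Rᵀ) * (R * Rᵀ)⁻¹ = 1 := Matrix.mul_nonsing_inv _ hR
  have e3 : (Cᵀ * C)⁻¹ * (Cᵀ * C) = 1 := Matrix.nonsing_inv_mul _ hC
  have e4 : (R * Rᵀ)⁻¹ * (R * Rᵀ) = 1 := Matrix.nonsing_inv_mul _ hR
  refine ⟨Rᵀ * (R * Rᵀ)⁻¹ * ((Cᵀ * C)⁻¹ * Cᵀ), ?_, ?_, ?_, ?_⟩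
  · rw [hMCR]
    calc C * R * (Rᵀ * (R * Rᵀ)⁻¹ * ((Cᵀ * C)⁻¹ * Cᵀ)) * (C * R)
        = C * ((R * Rᵀ) * (R * Rᵀ)⁻¹ * (((Cᵀ * C)⁻¹ * (Cᵀ * C)) * R)) := by
          simp only [Matrix.mul_assoc]
      _ = C * R := by rw [e2, e3, Matrix.one_mul, Matrix.one_mul]
  · rw [hMCR]
    calc Rᵀ * (R * Rᵀ)⁻¹ * ((Cᵀ * C)⁻¹ * Cᵀ) * (C * R) * (Rᵀ * (R * Rᵀ)⁻¹ * ((Cᵀ * C)⁻¹ * Cᵀ))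
        = Rᵀ * ((R * Rᵀ)⁻¹ * (((Cᵀ * C)⁻¹ * (Cᵀ * C)) * ((R * Rᵀ) * ((R * Rᵀ)⁻¹ * ((Cᵀ * C)⁻¹ * Cᵀ))))) := by
          simp only [Matrix.mul_assoc]
      _ = Rᵀ * ((R * Rᵀ)⁻¹ * ((R * Rᵀ) * ((R * Rᵀ)⁻¹ * ((Cᵀ * C)⁻¹ * Cᵀ)))) := by
          rw [e3, Matrix.one_mul]
      _ = Rᵀ * (((R * Rᵀ)⁻¹ * (R * Rᵀ)) * ((R * Rᵀ)⁻¹ * ((Cᵀ * C)⁻¹ * Cᵀ))) := by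
          simp only [Matrix.mul_assoc]
      _ = Rᵀ * (R * Rᵀ)⁻¹ * ((Cᵀ * C)⁻¹ * Cᵀ) := by
          rw [e4, Matrix.one_mul, Matrix.mul_assoc]
  · rw [hMCR]
    have h1 : C * R * (Rᵀ * (R * Rᵀ)⁻¹ * ((Cᵀ * C)⁻¹ * Cᵀ)) = C * ((Cᵀ * C)⁻¹ * Cᵀ) := by
      calc C * R * (Rᵀ * (R * Rᵀ)⁻¹ * ((Cᵀ * C)⁻¹ * Cᵀ))
          = C * ((R * Rᵀ) * (R * Rᵀ)⁻¹ * ((Cᵀ * C)⁻¹ * Cᵀ)) := by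
            simp only [Matrix.mul_assoc]
        _ = C * ((Cᵀ * C)⁻¹ * Cᵀ) := by rw [e2, Matrix.one_mul]
    rw [h1, Matrix.transpose_mul, Matrix.transpose_mul, Matrix.transpose_transpose,
      Matrix.transpose_nonsing_inv, Matrix.transpose_mul, Matrix.transpose_transpose,
      Matrix.mul_assoc]
  · rw [hMCR]
    have h1 : Rᵀ * (R * Rᵀ)⁻¹ * ((Cᵀ * C)⁻¹ * Cᵀ) * (C * R) = Rᵀ * ((R * Rᵀ)⁻¹ * R) := by
      calc Rᵀ * (R * Rᵀ)⁻¹ * ((Cᵀ * C)⁻¹ * Cᵀ) * (C * R)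
          = Rᵀ * ((R * Rᵀ)⁻¹ * (((Cᵀ * C)⁻¹ * (Cᵀ * C)) * R)) := by
            simp only [Matrix.mul_assoc]
        _ = Rᵀ * ((R * Rᵀ)⁻¹ * R) := by rw [e3, Matrix.one_mul]
    rw [h1, Matrix.transpose_mul, Matrix.transpose_mul, Matrix.transpose_transpose,
      Matrix.transpose_nonsing_inv, Matrix.transpose_mul, Matrix.transpose_transpose,
      Matrix.mul_assoc]



lemma range_mul_le {a b c : ℕ} (X : Matrix (Fin a) (Fin b) ℝ) (Y : Matrix (Fin b) (Fin c) ℝ) :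
    LinearMap.range (X * Y).mulVecLin ≤ LinearMap.range X.mulVecLin := by
  rw [Matrix.mulVecLin_mul]
  exact LinearMap.range_comp_le_range _ _

lemma range_eq_of_le_of_rank_eq {a b c : ℕ} {X : Matrix (Fin a) (Fin b) ℝ}
    {Y : Matrix (Fin a) (Fin c) ℝ}
    (hle : LinearMap.range X.mulVecLin ≤ LinearMap.range Y.mulVecLin)
    (hr : X.rank = Y.rank) :
    LinearMap.range X.mulVecLin = LinearMap.range Y.mulVecLin :=
  Submodule.eq_of_le_of_finrank_eq hle hr

lemma pinv_transpose {k l : ℕ} {M : Matrix (Fin k) (Fin l) ℝ} {N : Matrix (Fin l) (Fin k) ℝ}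
    (h : IsPseudoInv M N) : IsPseudoInv Mᵀ Nᵀ := by
  obtain ⟨h1, h2, h3, h4⟩ := h
  refine ⟨?_, ?_, ?_, ?_⟩
  · calc Mᵀ * Nᵀ * Mᵀ = (M * (N * M))ᵀ := by
          simp only [Matrix.transpose_mul, Matrix.mul_assoc]
      _ = Mᵀ := by rw [← Matrix.mul_assoc, h1]
  · calc Nᵀ * Mᵀ * Nᵀ = (N * (M * N))ᵀ := by
          simp only [Matrix.transpose_mul, Matrix.mul_assoc]
      _ = Nᵀ := by rw [← Matrix.mul_assoc, h2]
  · simp only [Matrix.transpose_mul, Matrix.transpose_transpose]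
    rw [← h4, Matrix.transpose_mul]
  · simp only [Matrix.transpose_mul, Matrix.transpose_transpose]
    rw [← h3, Matrix.transpose_mul]

/-- If `A'` is a pseudo-inverse of `B` and `Q` is a symmetric idempotent whose range
equals the range of `B`, then `B * A' = Q`. -/
lemma pinv_proj {a b : ℕ} {B : Matrix (Fin a) (Fin b) ℝ} {A' : Matrix (Fin b) (Fin a) ℝ}
    (h : IsPseudoInv B A') {Q : Matrix (Fin a) (Fin a) ℝ}
    (hQs : Qᵀ = Q) (hQi : Q * Q = Q)
    (hrange : LinearMap.range B.mulVecLin = LinearMap.range Q.mulVecLin) :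
    B * A' = Q := by
  obtain ⟨h1, h2, h3, h4⟩ := h
  have hidem : (B * A') * (B * A') = B * A' := by
    calc (B * A') * (B * A') = (B * A' * B) * A' := by simp only [Matrix.mul_assoc]
      _ = B * A' := by rw [h1]
  have hrange2 : LinearMap.range (B * A').mulVecLin = LinearMap.range B.mulVecLin := by
    apply le_antisymm (range_mul_le _ _)
    have hB : B = (B * A') * B := by rw [h1]
    intro v hv
    obtain ⟨x, hx⟩ := hv
    refine ⟨B *ᵥ x, ?_⟩
    rw [Matrix.mulVecLin_apply, Matrix.mulVec_mulVec, ← hB, ← Matrix.mulVecLin_apply, hx]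
  exact symm_idem_eq_of_range_eq h3 hidem hQs hQi (hrange2.trans hrange)

lemma exists_delta {a b : ℕ} (g : Matrix (Fin a) (Fin b) ℝ → ℝ) (hg : Continuous g)
    (T : Matrix (Fin a) (Fin b) ℝ) (hT : g T ≠ 0) :
    ∃ δ > (0:ℝ), ∀ S : Matrix (Fin a) (Fin b) ℝ, (∀ i j, |S i j - T i j| < δ) → g S ≠ 0 := by
  rcases Nat.eq_zero_or_pos a with ha | ha
  · exact ⟨1, one_pos, fun S _ => by
      have : S = T := by ext i j; exact absurd i.2 (by omega)
      rw [this]; exact hT⟩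
  rcases Nat.eq_zero_or_pos b with hb | hb
  · exact ⟨1, one_pos, fun S _ => by
      have : S = T := by ext i j; exact absurd j.2 (by omega)
      rw [this]; exact hT⟩
  -- work on the pi type
  let g' : (Fin a → Fin b → ℝ) → ℝ := fun f => g (Matrix.of f)
  have hg' : Continuous g' := hg.comp (continuous_matrix fun i j => by
    exact (continuous_apply j).comp (continuous_apply i))
  have hev : ∀ᶠ f in nhds (fun i j => T i j), g' f ≠ 0 := by
    have : ContinuousAt g' (fun i j => T i j) := hg'.continuousAt
    exact this.eventually_ne hT
  rw [Metric.eventually_nhds_iff] at hev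
  obtain ⟨ε, hε, hball⟩ := hev
  refine ⟨ε, hε, fun S hS => ?_⟩
  have : dist (fun i j => S i j) (fun i j => T i j) < ε := by
    rw [dist_pi_lt_iff hε]
    intro i
    rw [dist_pi_lt_iff hε]
    intro j
    rw [Real.dist_eq]
    exact hS i j
  exact hball this



lemma key {n m r : ℕ} (P_L : Matrix (Fin n) (Fin n) ℝ) (P_R : Matrix (Fin m) (Fin m) ℝ)
    (hPLidem : P_L * P_L = P_L) (hPRidem : P_R * P_R = P_R)
    (S : Matrix (Fin n) (Fin m) ℝ) (A' : Matrix (Fin m) (Fin n) ℝ)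
    (hpinv : IsPseudoInv ((1 - P_L) * S * (1 - P_R)) A')
    (hBA' : ((1 - P_L) * S * (1 - P_R)) * A' = 1 - P_L)
    (hA'B : A' * ((1 - P_L) * S * (1 - P_R)) = 1 - P_R)
    (hrB : ((1 - P_L) * S * (1 - P_R)).rank = r) :
    (S.rank = r ↔
      P_L * S * P_R - P_L * S * (1 - P_R) * A' * (1 - P_L) * S * P_R = 0) := by
  have hA'QL : A' * (1 - P_L) = A' := by
    calc A' * (1 - P_L) = A' * (((1 - P_L) * S * (1 - P_R)) * A') := by rw [hBA']
      _ = A' * ((1 - P_L) * S * (1 - P_R)) * A' := by rw [← Matrix.mul_assoc]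
      _ = A' := hpinv.2.1
  have hQRA' : (1 - P_R) * A' = A' := by
    calc (1 - P_R) * A' = (A' * ((1 - P_L) * S * (1 - P_R))) * A' := by rw [hA'B]
      _ = A' := hpinv.2.1
  have hA'PL : A' * P_L = 0 := by
    have h1 : A' * (1 - P_L) = A' - A' * P_L := by
      simp only [Matrix.mul_sub, Matrix.mul_one]
    exact sub_eq_self.mp (by rw [← h1, hA'QL])
  have hPRA' : P_R * A' = 0 := by
    have h1 : (1 - P_R) * A' = A' - P_R * A' := by
      simp only [Matrix.sub_mul, Matrix.one_mul]
    exact sub_eq_self.mp (by rw [← h1, hQRA'])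
  have rA'PL : ∀ (k : ℕ) (X : Matrix (Fin n) (Fin k) ℝ), A' * (P_L * X) = 0 := by
    intro k X; rw [← Matrix.mul_assoc, hA'PL, Matrix.zero_mul]
  have rPRA' : ∀ (k : ℕ) (X : Matrix (Fin n) (Fin k) ℝ), P_R * (A' * X) = 0 := by
    intro k X; rw [← Matrix.mul_assoc, hPRA', Matrix.zero_mul]
  have rQRA' : ∀ (k : ℕ) (X : Matrix (Fin n) (Fin k) ℝ), (1 - P_R) * (A' * X) = A' * X := by
    intro k X; rw [← Matrix.mul_assoc, hQRA']
  have rA'QL : ∀ (k : ℕ) (X : Matrix (Fin n) (Fin k) ℝ), A' * ((1 - P_L) * X) = A' * X := by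
    intro k X; rw [← Matrix.mul_assoc, hA'QL]
  have rPLPL : ∀ (k : ℕ) (X : Matrix (Fin n) (Fin k) ℝ), P_L * (P_L * X) = P_L * X := by
    intro k X; rw [← Matrix.mul_assoc, hPLidem]
  have hL : (1 - P_L) * (S * A') = 1 - P_L := by
    calc (1 - P_L) * (S * A') = (1 - P_L) * (S * ((1 - P_R) * A')) := by rw [hQRA']
      _ = ((1 - P_L) * S * (1 - P_R)) * A' := by simp only [Matrix.mul_assoc]
      _ = 1 - P_L := hBA'
  have hR : A' * (S * (1 - P_R)) = 1 - P_R := by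
    calc A' * (S * (1 - P_R)) = A' * ((1 - P_L) * (S * (1 - P_R))) := (rA'QL _ _).symm
      _ = A' * ((1 - P_L) * S * (1 - P_R)) := by rw [Matrix.mul_assoc]
      _ = 1 - P_R := hA'B
  have hSA' : S * A' = 1 - P_L + P_L * (S * A') := by
    have h1 : (1 - P_L) * (S * A') = S * A' - P_L * (S * A') := by
      simp only [Matrix.sub_mul, Matrix.one_mul]
    exact sub_eq_iff_eq_add.mp (by rw [← h1, hL])
  have hA'S : A' * S = 1 - P_R + A' * (S * P_R) := by
    have h1 : A' * (S * (1 - P_R)) = A' * S - A' * (S * P_R) := by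
      simp only [Matrix.mul_sub, Matrix.mul_one]
    exact sub_eq_iff_eq_add.mp (by rw [← h1, hR])
  -- abbreviations (opaque after introduction)
  obtain ⟨u, hu⟩ : ∃ u : Matrix (Fin n) (Fin n) ℝ, u = P_L * (S * A') := ⟨_, rfl⟩
  obtain ⟨v, hv⟩ : ∃ v : Matrix (Fin m) (Fin m) ℝ, v = A' * (S * P_R) := ⟨_, rfl⟩
  rw [← hu] at hSA'
  rw [← hv] at hA'S
  have hvA' : v * A' = 0 := by
    rw [hv, Matrix.mul_assoc, Matrix.mul_assoc, hPRA', Matrix.mul_zero, Matrix.mul_zero]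
  have hA'u : A' * u = 0 := by rw [hu, rA'PL]
  have hv2 : v * v = 0 := by
    rw [hv]
    calc A' * (S * P_R) * (A' * (S * P_R)) = A' * (S * (P_R * (A' * (S * P_R)))) := by
          simp only [Matrix.mul_assoc]
      _ = 0 := by rw [rPRA', Matrix.mul_zero, Matrix.mul_zero]
  have hu2 : u * u = 0 := by
    rw [hu]
    calc P_L * (S * A') * (P_L * (S * A')) = P_L * (S * (A' * (P_L * (S * A')))) := by
          simp only [Matrix.mul_assoc]
      _ = 0 := by rw [rA'PL, Matrix.mul_zero, Matrix.mul_zero]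
  have hA'v : A' * (S * v) = A' * (S * P_R) := by
    calc A' * (S * v) = (A' * S) * v := by rw [Matrix.mul_assoc]
      _ = (1 - P_R + v) * v := by rw [hA'S]
      _ = (1 - P_R) * v + v * v := by rw [Matrix.add_mul]
      _ = (1 - P_R) * v := by rw [hv2, add_zero]
      _ = A' * (S * P_R) := by rw [hv, rQRA']
  have hA'SA' : A' * (S * A') = A' := by
    calc A' * (S * A') = (A' * S) * A' := by rw [Matrix.mul_assoc]
      _ = (1 - P_R + v) * A' := by rw [hA'S]
      _ = (1 - P_R) * A' + v * A' := by rw [Matrix.add_mul]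
      _ = A' := by rw [hQRA', hvA', add_zero]
  have hA'Sv : A' * (S * v) = A' * (S * P_R) := hA'v
  obtain ⟨X, hX⟩ : ∃ X : Matrix (Fin n) (Fin m) ℝ, X = S - S * v := ⟨_, rfl⟩
  obtain ⟨M, hM⟩ : ∃ M : Matrix (Fin n) (Fin m) ℝ, M = X - u * X := ⟨_, rfl⟩
  have hMfact : M = (1 - u) * (S * (1 - v)) := by
    rw [hM, hX]
    simp only [Matrix.sub_mul, Matrix.one_mul, Matrix.mul_sub, Matrix.mul_one]
    abel
  have h1pv : (1 - v) * (1 + v) = 1 := by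
    simp only [Matrix.sub_mul, Matrix.mul_add, Matrix.one_mul, Matrix.mul_one, hv2]
    abel
  have h1pu : (1 + u) * (1 - u) = 1 := by
    simp only [Matrix.add_mul, Matrix.mul_sub, Matrix.one_mul, Matrix.mul_one, hu2]
    abel
  have hSfact : S = (1 + u) * (M * (1 + v)) := by
    have h1 : M * (1 + v) = (1 - u) * S := by
      calc M * (1 + v) = (1 - u) * (S * ((1 - v) * (1 + v))) := by
            rw [hMfact]; simp only [Matrix.mul_assoc]
        _ = (1 - u) * S := by rw [h1pv, Matrix.mul_one]
    rw [h1, ← Matrix.mul_assoc, h1pu, Matrix.one_mul]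
  have hrSM : M.rank = S.rank := by
    apply le_antisymm
    · rw [hMfact]
      calc ((1 - u) * (S * (1 - v))).rank ≤ (S * (1 - v)).rank :=
            Matrix.rank_mul_le_right _ _
        _ ≤ S.rank := Matrix.rank_mul_le_left _ _
    · conv_lhs => rw [hSfact]
      calc ((1 + u) * (M * (1 + v))).rank ≤ (M * (1 + v)).rank :=
            Matrix.rank_mul_le_right _ _
        _ ≤ M.rank := Matrix.rank_mul_le_left _ _
  have huSA' : u * (S * A') = u := by
    calc u * (S * A') = P_L * (S * (A' * (S * A'))) := by
          rw [hu]; simp only [Matrix.mul_assoc]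
      _ = u := by rw [hA'SA', hu]
  have hMA' : M * A' = 1 - P_L := by
    have h1 : X * A' = S * A' := by
      rw [hX, Matrix.sub_mul, Matrix.mul_assoc, hvA', Matrix.mul_zero, sub_zero]
    calc M * A' = X * A' - u * (X * A') := by
          rw [hM, Matrix.sub_mul, Matrix.mul_assoc]
      _ = S * A' - u * (S * A') := by rw [h1]
      _ = S * A' - u := by rw [huSA']
      _ = 1 - P_L := by rw [hSA']; abel
  have hQLSv : (1 - P_L) * (S * v) = (1 - P_L) * (S * P_R) := by
    calc (1 - P_L) * (S * v) = ((1 - P_L) * (S * A')) * (S * P_R) := by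
          rw [hv]; simp only [Matrix.mul_assoc]
      _ = (1 - P_L) * (S * P_R) := by rw [hL]
  have hQLu : (1 - P_L) * u = 0 := by
    rw [hu, Matrix.sub_mul, Matrix.one_mul, rPLPL, sub_self]
  have hQLM : (1 - P_L) * M = (1 - P_L) * S * (1 - P_R) := by
    calc (1 - P_L) * M = (1 - P_L) * X - ((1 - P_L) * u) * X := by
          rw [hM, Matrix.mul_sub, ← Matrix.mul_assoc]
      _ = (1 - P_L) * X := by rw [hQLu, Matrix.zero_mul, sub_zero]
      _ = (1 - P_L) * S - (1 - P_L) * (S * P_R) := by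
          rw [hX, Matrix.mul_sub, hQLSv]
      _ = (1 - P_L) * S * (1 - P_R) := by
          rw [Matrix.mul_sub, Matrix.mul_one, Matrix.mul_assoc]
  have hPLu : P_L * u = u := by rw [hu, rPLPL]
  have huS : u * S = P_L * S - P_L * (S * P_R) + P_L * (S * v) := by
    calc u * S = P_L * (S * (A' * S)) := by
          rw [hu]; simp only [Matrix.mul_assoc]
      _ = P_L * (S * (1 - P_R) + S * v) := by
          rw [hA'S, Matrix.mul_add]
      _ = P_L * S - P_L * (S * P_R) + P_L * (S * v) := by
          simp only [Matrix.mul_add, Matrix.mul_sub, Matrix.mul_one]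
  have huSv : u * (S * v) = P_L * (S * v) := by
    calc u * (S * v) = P_L * (S * (A' * (S * v))) := by
          rw [hu]; simp only [Matrix.mul_assoc]
      _ = P_L * (S * (A' * (S * P_R))) := by rw [hA'Sv]
      _ = P_L * (S * v) := by rw [← hv]
  have hPLM : P_L * M = P_L * (S * P_R) - P_L * (S * v) := by
    calc P_L * M = P_L * X - (P_L * u) * X := by
          rw [hM, Matrix.mul_sub, ← Matrix.mul_assoc]
      _ = P_L * X - u * X := by rw [hPLu]
      _ = (P_L * S - P_L * (S * v)) - (u * S - u * (S * v)) := by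
          rw [hX]; simp only [Matrix.mul_sub]
      _ = (P_L * S - P_L * (S * v))
          - ((P_L * S - P_L * (S * P_R) + P_L * (S * v)) - P_L * (S * v)) := by
          rw [huS, huSv]
      _ = P_L * (S * P_R) - P_L * (S * v) := by abel
  have hSig : P_L * S * P_R - P_L * S * (1 - P_R) * A' * (1 - P_L) * S * P_R = P_L * M := by
    rw [hPLM]
    have h1 : P_L * S * (1 - P_R) * A' * (1 - P_L) * S * P_R = P_L * (S * v) := by
      calc P_L * S * (1 - P_R) * A' * (1 - P_L) * S * P_R
          = P_L * (S * ((1 - P_R) * (A' * ((1 - P_L) * (S * P_R))))) := by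
            simp only [Matrix.mul_assoc]
        _ = P_L * (S * (A' * (S * P_R))) := by rw [rA'QL, rQRA']
        _ = P_L * (S * v) := by rw [← hv]
    rw [h1, Matrix.mul_assoc]
  have hMsum : M = (1 - P_L) * S * (1 - P_R) + P_L * M := by
    have h1 : (1 - P_L) * M = M - P_L * M := by
      simp only [Matrix.sub_mul, Matrix.one_mul]
    rw [← hQLM, h1]; abel
  have hPLB : P_L * ((1 - P_L) * S * (1 - P_R)) = 0 := by
    have h1 : P_L * (1 - P_L) = 0 := by
      rw [Matrix.mul_sub, Matrix.mul_one, hPLidem, sub_self]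
    rw [Matrix.mul_assoc, ← Matrix.mul_assoc P_L (1 - P_L) (S * (1 - P_R)), h1,
      Matrix.zero_mul]
  constructor
  · intro hrS
    have hrM : M.rank = r := by rw [hrSM, hrS]
    have hBfromM : (1 - P_L) * S * (1 - P_R) = M * (A' * M) := by
      rw [← Matrix.mul_assoc, hMA', hQLM]
    have hrange : LinearMap.range ((1 - P_L) * S * (1 - P_R)).mulVecLin
        = LinearMap.range M.mulVecLin := by
      apply range_eq_of_le_of_rank_eq
      · rw [hBfromM]; exact range_mul_le M (A' * M)
      · rw [hrB, hrM]
    have hPLM0 : P_L * M = 0 := by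
      apply eq_of_mulVec_eq
      intro x
      have hmem : M *ᵥ x ∈ LinearMap.range ((1 - P_L) * S * (1 - P_R)).mulVecLin := by
        rw [hrange]; exact ⟨x, rfl⟩
      obtain ⟨y, hy⟩ := hmem
      calc (P_L * M) *ᵥ x = P_L *ᵥ (M *ᵥ x) := by rw [Matrix.mulVec_mulVec]
        _ = P_L *ᵥ (((1 - P_L) * S * (1 - P_R)) *ᵥ y) := by
            rw [← hy, Matrix.mulVecLin_apply]
        _ = (P_L * ((1 - P_L) * S * (1 - P_R))) *ᵥ y := by rw [Matrix.mulVec_mulVec]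
        _ = (0 : Matrix (Fin n) (Fin m) ℝ) *ᵥ x := by
            rw [hPLB, Matrix.zero_mulVec, Matrix.zero_mulVec]
    rw [hSig, hPLM0]
  · intro h0
    rw [hSig] at h0
    have hMB : M = (1 - P_L) * S * (1 - P_R) := by
      rw [hMsum, h0, add_zero]
    rw [← hrSM, hMB, hrB]


end Stmt18Aux

set_option maxHeartbeats 1000000 in
open Stmt18Aux in
theorem stmt18 {n m : ℕ} (r : ℕ) (T : Matrix (Fin n) (Fin m) ℝ) (hT : T.rank = r)
    (P_L : Matrix (Fin n) (Fin n) ℝ) (P_R : Matrix (Fin m) (Fin m) ℝ)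
    (hPLsymm : Matrix.transpose P_L = P_L) (hPLidem : P_L * P_L = P_L)
    (hPLker : ∀ v : Fin n → ℝ, P_L *ᵥ v = v ↔ Matrix.transpose T *ᵥ v = 0)
    (hPRsymm : Matrix.transpose P_R = P_R) (hPRidem : P_R * P_R = P_R)
    (hPRker : ∀ v : Fin m → ℝ, P_R *ᵥ v = v ↔ T *ᵥ v = 0) :
    ∃ A : Matrix (Fin m) (Fin n) ℝ, P_R * A = 0 ∧ A * P_L = 0 ∧
      IsPseudoInv ((1 - P_L) * T * (1 - P_R)) A ∧
      (∃ δ > (0:ℝ), ∀ S : Matrix (Fin n) (Fin m) ℝ, (∀ i j, |S i j - T i j| < δ) →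
        ∀ A' : Matrix (Fin m) (Fin n) ℝ, IsPseudoInv ((1 - P_L) * S * (1 - P_R)) A' →
          (S.rank = r ↔
            P_L * S * P_R - P_L * S * (1 - P_R) * A' * (1 - P_L) * S * P_R = 0)) ∧
      P_L * T * P_R - P_L * T * (1 - P_R) * A * (1 - P_L) * T * P_R = 0 := by
  -- basic kernel facts
  have hTPR : T * P_R = 0 := by
    apply eq_of_mulVec_eq
    intro x
    rw [← Matrix.mulVec_mulVec, Matrix.zero_mulVec]
    apply (hPRker (P_R *ᵥ x)).mp
    rw [Matrix.mulVec_mulVec, hPRidem]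
  have hTtPL : Tᵀ * P_L = 0 := by
    apply eq_of_mulVec_eq
    intro x
    rw [← Matrix.mulVec_mulVec, Matrix.zero_mulVec]
    apply (hPLker (P_L *ᵥ x)).mp
    rw [Matrix.mulVec_mulVec, hPLidem]
  have hPLT : P_L * T = 0 := by
    have := congrArg Matrix.transpose hTtPL
    rw [Matrix.transpose_mul, Matrix.transpose_transpose, hPLsymm, Matrix.transpose_zero]
      at this
    exact this
  have hQTQ : (1 - P_L) * T * (1 - P_R) = T := by
    rw [Matrix.sub_mul, Matrix.one_mul, hPLT, sub_zero, Matrix.mul_sub, Matrix.mul_one,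
      hTPR, sub_zero]
  -- symmetric idempotents 1 - P_L, 1 - P_R
  have hQLs : (1 - P_L)ᵀ = 1 - P_L := by
    rw [Matrix.transpose_sub, Matrix.transpose_one, hPLsymm]
  have hQRs : (1 - P_R)ᵀ = 1 - P_R := by
    rw [Matrix.transpose_sub, Matrix.transpose_one, hPRsymm]
  have hQLi : (1 - P_L) * (1 - P_L) = 1 - P_L := by
    simp only [Matrix.mul_sub, Matrix.sub_mul, Matrix.mul_one, Matrix.one_mul, hPLidem]
    abel
  have hQRi : (1 - P_R) * (1 - P_R) = 1 - P_R := by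
    simp only [Matrix.mul_sub, Matrix.sub_mul, Matrix.mul_one, Matrix.one_mul, hPRidem]
    abel
  -- ranks of the complements
  have hrQL : (1 - P_L).rank = r := by
    rw [rank_one_sub_proj Tᵀ hPLidem hPLker, Matrix.rank_transpose, hT]
  have hrQR : (1 - P_R).rank = r := by
    rw [rank_one_sub_proj T hPRidem hPRker, hT]
  -- the pseudo-inverse of T
  obtain ⟨A, hA⟩ := exists_pinv T
  have hPRTt : P_R * Tᵀ = 0 := by
    rw [← hPRsymm, ← Matrix.transpose_mul, hTPR, Matrix.transpose_zero]
  have hPRA : P_R * A = 0 := by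
    have h1 : A = Tᵀ * Aᵀ * A := by
      calc A = A * T * A := (hA.2.1).symm
        _ = (A * T)ᵀ * A := by rw [hA.2.2.2]
        _ = Tᵀ * Aᵀ * A := by rw [Matrix.transpose_mul]
    calc P_R * A = P_R * (Tᵀ * Aᵀ * A) := by conv_lhs => rw [h1]
      _ = (P_R * Tᵀ) * (Aᵀ * A) := by simp only [Matrix.mul_assoc]
      _ = 0 := by rw [hPRTt, Matrix.zero_mul]
  have hAPL : A * P_L = 0 := by
    have h2 : A = A * (Aᵀ * Tᵀ) := by
      calc A = A * T * A := (hA.2.1).symm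
        _ = A * (T * A) := by rw [Matrix.mul_assoc]
        _ = A * ((T * A)ᵀ) := by rw [hA.2.2.1]
        _ = A * (Aᵀ * Tᵀ) := by rw [Matrix.transpose_mul]
    calc A * P_L = (A * (Aᵀ * Tᵀ)) * P_L := by conv_lhs => rw [h2]
      _ = A * (Aᵀ * (Tᵀ * P_L)) := by simp only [Matrix.mul_assoc]
      _ = 0 := by rw [hTtPL, Matrix.mul_zero, Matrix.mul_zero]
  -- the neighborhood
  obtain ⟨L, R', hLR⟩ := exists_LR T hT
  have hgcont : Continuous fun S : Matrix (Fin n) (Fin m) ℝ =>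
      (L * ((1 - P_L) * S * (1 - P_R)) * R').det := by
    apply Continuous.matrix_det
    apply Continuous.matrix_mul _ continuous_const
    apply Continuous.matrix_mul continuous_const
    apply Continuous.matrix_mul _ continuous_const
    exact Continuous.matrix_mul continuous_const continuous_id
  have hgT : (L * ((1 - P_L) * T * (1 - P_R)) * R').det ≠ 0 := by
    rw [hQTQ, hLR, Matrix.det_one]
    exact one_ne_zero
  obtain ⟨δ, hδ, hball⟩ := exists_delta _ hgcont T hgT
  refine ⟨A, hPRA, hAPL, by rw [hQTQ]; exact hA, ⟨δ, hδ, ?_⟩, ?_⟩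
  · intro S hS A' hpinv
    have hdet : (L * ((1 - P_L) * S * (1 - P_R)) * R').det ≠ 0 := hball S hS
    -- rank of B equals r
    have hrB : ((1 - P_L) * S * (1 - P_R)).rank = r := by
      apply le_antisymm
      · calc ((1 - P_L) * S * (1 - P_R)).rank
            = ((1 - P_L) * (S * (1 - P_R))).rank := by rw [Matrix.mul_assoc]
          _ ≤ (1 - P_L).rank := Matrix.rank_mul_le_left _ _
          _ = r := hrQL
      · have hunit : IsUnit (L * ((1 - P_L) * S * (1 - P_R)) * R') := by
          rw [Matrix.isUnit_iff_isUnit_det]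
          exact isUnit_iff_ne_zero.mpr hdet
        have e1 : (L * ((1 - P_L) * S * (1 - P_R)) * R').rank = r := by
          rw [Matrix.rank_of_isUnit _ hunit, Fintype.card_fin]
        have e2 : (L * ((1 - P_L) * S * (1 - P_R)) * R').rank
            ≤ (L * ((1 - P_L) * S * (1 - P_R))).rank :=
          Matrix.rank_mul_le_left (L * ((1 - P_L) * S * (1 - P_R))) R'
        have e3 : (L * ((1 - P_L) * S * (1 - P_R))).rank
            ≤ ((1 - P_L) * S * (1 - P_R)).rank :=
          Matrix.rank_mul_le_right L ((1 - P_L) * S * (1 - P_R))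
        omega
    -- B * A' = 1 - P_L
    have hrangeB : LinearMap.range ((1 - P_L) * S * (1 - P_R)).mulVecLin
        = LinearMap.range (1 - P_L).mulVecLin := by
      apply range_eq_of_le_of_rank_eq
      · calc LinearMap.range ((1 - P_L) * S * (1 - P_R)).mulVecLin
            = LinearMap.range ((1 - P_L) * (S * (1 - P_R))).mulVecLin := by
              rw [Matrix.mul_assoc]
          _ ≤ LinearMap.range (1 - P_L).mulVecLin := range_mul_le _ _
      · rw [hrB, hrQL]
    have hBA' : ((1 - P_L) * S * (1 - P_R)) * A' = 1 - P_L :=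
      pinv_proj hpinv hQLs hQLi hrangeB
    -- A' * B = 1 - P_R
    have hBt : ((1 - P_L) * S * (1 - P_R))ᵀ = (1 - P_R) * (Sᵀ * (1 - P_L)) := by
      rw [Matrix.transpose_mul, Matrix.transpose_mul, hQLs, hQRs]
    have hrangeBt : LinearMap.range (((1 - P_L) * S * (1 - P_R))ᵀ).mulVecLin
        = LinearMap.range (1 - P_R).mulVecLin := by
      apply range_eq_of_le_of_rank_eq
      · rw [hBt]; exact range_mul_le _ _
      · rw [Matrix.rank_transpose, hrB, hrQR]
    have hBtA't : ((1 - P_L) * S * (1 - P_R))ᵀ * A'ᵀ = 1 - P_R :=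
      pinv_proj (pinv_transpose hpinv) hQRs hQRi hrangeBt
    have hA'B : A' * ((1 - P_L) * S * (1 - P_R)) = 1 - P_R := by
      have := congrArg Matrix.transpose hBtA't
      rw [Matrix.transpose_mul, Matrix.transpose_transpose, Matrix.transpose_transpose,
        hQRs] at this
      exact this
    exact key P_L P_R hPLidem hPRidem S A' hpinv hBA' hA'B hrB
  · rw [hPLT]
    simp only [Matrix.zero_mul, sub_zero, sub_self]
end
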